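/- There exists a first-order sentence φ in the first-order language with a single binary relation symbol ≤ (and equality) such that for every finite distributive lattice D satisfying the Two-cover Property (viewed as a structure for this language via its lattice order): D satisfies φ if and only if D satisfies the Decomposable Cyclic Elements Property. -/

import Mathlib

open FirstOrder

section LatticeDefs

variable {α : Type*} [Lattice α] [OrderBot α]

/-- An element of a lattice with least element `⊥` is *join-irreducible* if it is not the
least element and `x = y ⊔ z` implies `x = y` or `x = z`. -/
def JoinIrred (x : α) : Prop :=
  x ≠ ⊥ ∧ ∀ y z : α, x = y ⊔ z → x = y ∨ x = z

variable (α) in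
/-- The set of maximal elements of the poset of join-irreducible elements. -/
def maxJI : Set α :=
  {a | JoinIrred a ∧ ∀ b : α, JoinIrred b → a ≤ b → a = b}

/-- `c` is covered by `a` in the poset of join-irreducible elements. -/
def JCovBy (c a : α) : Prop :=
  JoinIrred c ∧ JoinIrred a ∧ c < a ∧ ∀ d : α, JoinIrred d → c < d → d < a → False

variable (α) in
/-- The *Two-cover Property*: every join-irreducible element has at most two covers in the
poset of join-irreducible elements. -/
def TwoCoverProperty : Prop :=
  ∀ x y z w : α, JCovBy x y → JCovBy x z → JCovBy x w → y = z ∨ y = w ∨ z = w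

variable (α) in
/-- The *Bipartite Maximal Elements Property*: the set of maximal join-irreducible elements
is the disjoint union of two nonempty subsets such that no two distinct elements of the same
subset have a common lower cover in the poset of join-irreducible elements. -/
def BipartiteMaxElements : Prop :=
  ∃ A B : Set α, A.Nonempty ∧ B.Nonempty ∧ Disjoint A B ∧ A ∪ B = maxJI α ∧
    (∀ a ∈ A, ∀ b ∈ A, a ≠ b → ¬∃ c : α, JCovBy c a ∧ JCovBy c b) ∧
    (∀ a ∈ B, ∀ b ∈ B, a ≠ b → ¬∃ c : α, JCovBy c a ∧ JCovBy c b)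

/-- A *cyclic element*: the join of pairwise distinct maximal join-irreducible elements
`a 0, …, a (n-1)` (`n ≥ 3`) such that for `i < j`, some join-irreducible element lies below
both `a i` and `a j` if and only if `j = i + 1` or `(i, j) = (0, n - 1)`. -/
def IsCyclicElem (x : α) : Prop :=
  ∃ n : ℕ, 3 ≤ n ∧ ∃ a : Fin n → α, Function.Injective a ∧ (∀ i, a i ∈ maxJI α) ∧
    x = Finset.univ.sup a ∧
    ∀ i j : Fin n, i < j →
      ((∃ c : α, JoinIrred c ∧ c ≤ a i ∧ c ≤ a j) ↔
        ((j : ℕ) = (i : ℕ) + 1 ∨ ((i : ℕ) = 0 ∧ (j : ℕ) = n - 1)))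

/-- A *V-set* of `x`: a two-element subset of `maxJI α ∩ ↓x` whose two elements have a
common join-irreducible lower bound. -/
def IsVSet (x : α) (S : Set α) : Prop :=
  ∃ a₀ a₁ : α, a₀ ≠ a₁ ∧ S = {a₀, a₁} ∧ a₀ ∈ maxJI α ∧ a₁ ∈ maxJI α ∧ a₀ ≤ x ∧ a₁ ≤ x ∧
    ∃ c : α, JoinIrred c ∧ c ≤ a₀ ∧ c ≤ a₁

/-- A *W-set* of `x`: a four-element subset `{a 0, a 1, a 2, a 3}` of `maxJI α ∩ ↓x` such
that for `i < j`, some join-irreducible element lies below both `a i` and `a j` if and only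
if `j = i + 1`. -/
def IsWSet (x : α) (S : Set α) : Prop :=
  ∃ a : Fin 4 → α, Function.Injective a ∧ S = Set.range a ∧
    (∀ i, a i ∈ maxJI α ∧ a i ≤ x) ∧
    ∀ i j : Fin 4, i < j →
      ((∃ c : α, JoinIrred c ∧ c ≤ a i ∧ c ≤ a j) ↔ (j : ℕ) = (i : ℕ) + 1)

/-- A *VW-element*: a nonzero element `x` which is the join of `maxJI α ∩ ↓x`, such that
each element of `maxJI α ∩ ↓x` either belongs to a unique V-set of `x` and to no W-set of
`x`, or belongs to a unique W-set of `x` and to no V-set of `x`. -/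
def IsVWElem (x : α) : Prop :=
  x ≠ ⊥ ∧ IsLUB (maxJI α ∩ Set.Iic x) x ∧
    ∀ y ∈ maxJI α ∩ Set.Iic x,
      ((∃! S : Set α, IsVSet x S ∧ y ∈ S) ∧ ¬∃ S : Set α, IsWSet x S ∧ y ∈ S) ∨
      ((∃! S : Set α, IsWSet x S ∧ y ∈ S) ∧ ¬∃ S : Set α, IsVSet x S ∧ y ∈ S)

variable (α) in
/-- The *Decomposable Cyclic Elements Property*: each cyclic element `x` is the join of two
VW-elements `y`, `z` with `maxJI α ∩ ↓y ∩ ↓z = ∅`. -/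
def DecomposableCyclicElements : Prop :=
  ∀ x : α, IsCyclicElem x →
    ∃ y z : α, IsVWElem y ∧ IsVWElem z ∧ x = y ⊔ z ∧
      maxJI α ∩ Set.Iic y ∩ Set.Iic z = ∅

end LatticeDefs

/-! ### Semantic auxiliary predicates -/

section Sem

variable {α : Type*} [Lattice α] [OrderBot α]

/-- Adjacency: two distinct elements with a common join-irreducible lower bound. -/
def DCEAdj (a b : α) : Prop := a ≠ b ∧ ∃ c : α, JoinIrred c ∧ c ≤ a ∧ c ≤ b

/-- `a` is a maximal join-irreducible element below `x`. -/
def DCEMem (x a : α) : Prop := a ∈ maxJI α ∧ a ≤ x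

lemma DCEAdj.symm {a b : α} (h : DCEAdj a b) : DCEAdj b a :=
  ⟨h.1.symm, h.2.imp fun c hc => ⟨hc.1, hc.2.2, hc.2.1⟩⟩

/-- Semantic counterpart of the first-order "cyclic element" formula. -/
def SemCyc (x : α) : Prop :=
  (∀ u : α, (∀ a, DCEMem x a → a ≤ u) → x ≤ u) ∧
  (∃ a b c : α, DCEMem x a ∧ DCEMem x b ∧ DCEMem x c ∧ a ≠ b ∧ a ≠ c ∧ b ≠ c) ∧
  (∀ a, DCEMem x a → ∃ b c, DCEMem x b ∧ DCEMem x c ∧ b ≠ c ∧ DCEAdj a b ∧ DCEAdj a c ∧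
      ∀ d, DCEMem x d → DCEAdj a d → d = b ∨ d = c) ∧
  (∀ u : α, (∃ a, DCEMem x a ∧ a ≤ u) →
      (∀ a b, DCEMem x a → a ≤ u → DCEMem x b → DCEAdj a b → b ≤ u) →
      ∀ a, DCEMem x a → a ≤ u)

/-- Semantic counterpart of the first-order "VW-element" formula. -/
def SemVW (y : α) : Prop :=
  y ≠ ⊥ ∧ (∀ u : α, (∀ a, DCEMem y a → a ≤ u) → y ≤ u) ∧
  ∀ a, DCEMem y a → ∃ b, DCEMem y b ∧ DCEAdj a b ∧ ∀ c, DCEMem y c → DCEAdj a c → c = b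

variable (α) in
/-- Semantic counterpart of the sentence. -/
def SemDCE : Prop :=
  ∀ x : α, SemCyc x →
    ∃ y z : α, SemVW y ∧ SemVW z ∧ x = y ⊔ z ∧ ∀ a, ¬(DCEMem y a ∧ a ≤ z)

lemma joinIrred_iff_supIrred {x : α} : JoinIrred x ↔ SupIrred x := by
  constructor
  · rintro ⟨h1, h2⟩
    refine ⟨fun h => h1 (le_bot_iff.mp (h bot_le)), fun b c hbc => ?_⟩
    rcases h2 b c hbc.symm with h | h
    · exact Or.inl h.symm
    · exact Or.inr h.symm
  · rintro ⟨h1, h2⟩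
    refine ⟨fun h => h1 (h ▸ isMin_bot), fun b c hbc => ?_⟩
    rcases h2 hbc.symm with h | h
    · exact Or.inl h.symm
    · exact Or.inr h.symm

end Sem

section SemDistrib

variable {α : Type*} [DistribLattice α] [OrderBot α]

/-- A maximal join-irreducible element below a finite sup of maximal join-irreducible
elements is one of them. -/
lemma maxJI_le_finset_sup {a : α} (ha : a ∈ maxJI α) {s : Finset α} {f : s → α}
    (hf : ∀ i, f i ∈ maxJI α) (h : a ≤ Finset.univ.sup f) : ∃ i, a = f i := by
  have hprime : SupPrime a := supPrime_iff_supIrred.mpr (joinIrred_iff_supIrred.mp ha.1)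
  obtain ⟨i, -, hi⟩ := hprime.le_finset_sup.mp h
  exact ⟨i, ha.2 (f i) (hf i).1 hi⟩

lemma maxJI_le_fin_sup {n : ℕ} {a : α} (ha : a ∈ maxJI α) {f : Fin n → α}
    (hf : ∀ i, f i ∈ maxJI α) (h : a ≤ Finset.univ.sup f) : ∃ i, a = f i := by
  have hprime : SupPrime a := supPrime_iff_supIrred.mpr (joinIrred_iff_supIrred.mp ha.1)
  obtain ⟨i, -, hi⟩ := hprime.le_finset_sup.mp h
  exact ⟨i, ha.2 (f i) (hf i).1 hi⟩

end SemDistrib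

/-! ### The VW-element equivalence -/

section VWEquiv

variable {α : Type*} [Lattice α] [OrderBot α]

lemma isVWElem_iff_semVW {y : α} : IsVWElem y ↔ SemVW y := by
  have hlub : IsLUB (maxJI α ∩ Set.Iic y) y ↔ ∀ u : α, (∀ a, DCEMem y a → a ≤ u) → y ≤ u := by
    constructor
    · intro h u hu
      exact h.2 fun a ha => hu a ⟨ha.1, ha.2⟩
    · intro h
      exact ⟨fun a ha => ha.2, fun u hu => h u fun a ha => hu ⟨ha.1, ha.2⟩⟩
  constructor
  · rintro ⟨hne, hl, hvw⟩
    refine ⟨hne, hlub.mp hl, ?_⟩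
    intro a ha
    rcases hvw a ⟨ha.1, ha.2⟩ with ⟨⟨S, ⟨hS, haS⟩, huniq⟩, -⟩ | ⟨⟨S, ⟨hS, haS⟩, -⟩, hnoV⟩
    · obtain ⟨a₀, a₁, hne01, rfl, h0m, h1m, h0y, h1y, c, hcj, hc0, hc1⟩ := hS
      have hpart : ∃ b, DCEMem y b ∧ DCEAdj a b := by
        simp only [Set.mem_insert_iff, Set.mem_singleton_iff] at haS
        rcases haS with rfl | rfl
        · exact ⟨a₁, ⟨h1m, h1y⟩, hne01, c, hcj, hc0, hc1⟩
        · exact ⟨a₀, ⟨h0m, h0y⟩, hne01.symm, c, hcj, hc1, hc0⟩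
      obtain ⟨b, hbm, hab⟩ := hpart
      refine ⟨b, hbm, hab, ?_⟩
      intro c' hc' hac'
      have e1 := huniq {a, b}
        ⟨⟨a, b, hab.1, rfl, ha.1, hbm.1, ha.2, hbm.2, hab.2⟩, Set.mem_insert _ _⟩
      have e2 := huniq {a, c'}
        ⟨⟨a, c', hac'.1, rfl, ha.1, hc'.1, ha.2, hc'.2, hac'.2⟩, Set.mem_insert _ _⟩
      have e : ({a, c'} : Set α) = {a, b} := e2.trans e1.symm
      have hmem : c' ∈ ({a, b} : Set α) := e ▸ Set.mem_insert_of_mem _ rfl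
      simp only [Set.mem_insert_iff, Set.mem_singleton_iff] at hmem
      rcases hmem with h | h
      · exact absurd h.symm hac'.1
      · exact h
    · exfalso
      apply hnoV
      obtain ⟨p, hpinj, rfl, hpm, hpe⟩ := hS
      obtain ⟨i, rfl⟩ := haS
      have hVpair : ∀ k k' : Fin 4, k < k' → (k' : ℕ) = (k : ℕ) + 1 →
          IsVSet y {p k, p k'} := by
        intro k k' hlt hsucc
        have hne' : p k ≠ p k' := fun h => absurd (hpinj h) (ne_of_lt hlt)
        exact ⟨p k, p k', hne', rfl, (hpm k).1, (hpm k').1, (hpm k).2, (hpm k').2,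
          (hpe k k' hlt).mpr hsucc⟩
      fin_cases i
      · exact ⟨{p 0, p 1}, hVpair 0 1 (by decide) rfl, Set.mem_insert _ _⟩
      · exact ⟨{p 0, p 1}, hVpair 0 1 (by decide) rfl, Set.mem_insert_of_mem _ rfl⟩
      · exact ⟨{p 2, p 3}, hVpair 2 3 (by decide) rfl, Set.mem_insert _ _⟩
      · exact ⟨{p 2, p 3}, hVpair 2 3 (by decide) rfl, Set.mem_insert_of_mem _ rfl⟩
  · rintro ⟨hne, hl, hmatch⟩
    refine ⟨hne, hlub.mpr hl, ?_⟩
    intro a ha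
    obtain ⟨b, hbm, hab, huniq⟩ := hmatch a ⟨ha.1, ha.2⟩
    left
    constructor
    · refine ⟨{a, b}, ⟨⟨a, b, hab.1, rfl, ha.1, hbm.1, ha.2, hbm.2, hab.2⟩,
        Set.mem_insert _ _⟩, ?_⟩
      rintro S ⟨⟨a₀, a₁, hne01, rfl, h0m, h1m, h0y, h1y, c, hcj, hc0, hc1⟩, haS⟩
      simp only [Set.mem_insert_iff, Set.mem_singleton_iff] at haS
      rcases haS with rfl | rfl
      · have : a₁ = b := huniq a₁ ⟨h1m, h1y⟩ ⟨hne01, c, hcj, hc0, hc1⟩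
        rw [this]
      · have : a₀ = b := huniq a₀ ⟨h0m, h0y⟩ ⟨hne01.symm, c, hcj, hc1, hc0⟩
        rw [this, Set.pair_comm]
    · rintro ⟨S, ⟨p, hpinj, rfl, hpm, hpe⟩, -⟩
      obtain ⟨b1, hb1m, hb1adj, hu1⟩ := hmatch (p 1) ⟨(hpm 1).1, (hpm 1).2⟩
      obtain ⟨c, hcj, hc0, hc1⟩ := (hpe 0 1 (by decide)).mpr rfl
      obtain ⟨c', hcj', hc1', hc2'⟩ := (hpe 1 2 (by decide)).mpr rfl
      have hne01 : p 1 ≠ p 0 := fun h => absurd (hpinj h) (by decide)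
      have hne12 : p 1 ≠ p 2 := fun h => absurd (hpinj h) (by decide)
      have h0 : p 0 = b1 := hu1 (p 0) ⟨(hpm 0).1, (hpm 0).2⟩ ⟨hne01, c, hcj, hc1, hc0⟩
      have h2 : p 2 = b1 := hu1 (p 2) ⟨(hpm 2).1, (hpm 2).2⟩ ⟨hne12, c', hcj', hc1', hc2'⟩
      have : p 0 = p 2 := h0.trans h2.symm
      exact absurd (hpinj this) (by decide)

end VWEquiv

/-! ### The cyclic element equivalence -/

section Walk

variable {α : Type*} [Lattice α] [OrderBot α]

open Classical in
/-- Pick the neighbor of `q` (in the graph of maximal join-irreducibles below `x`)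
other than `p`, if one exists. -/
noncomputable def dceNext (x p q : α) : α :=
  if h : ∃ d, DCEMem x d ∧ DCEAdj q d ∧ d ≠ p then h.choose else q

lemma dceNext_spec {x p q : α} (h : ∃ d, DCEMem x d ∧ DCEAdj q d ∧ d ≠ p) :
    DCEMem x (dceNext x p q) ∧ DCEAdj q (dceNext x p q) ∧ dceNext x p q ≠ p := by
  rw [dceNext, dif_pos h]; exact h.choose_spec

/-- The non-backtracking walk starting at `a`, `b`. -/
noncomputable def dceWalk (x a b : α) : ℕ → α
  | 0 => a
  | 1 => b
  | (k+2) => dceNext x (dceWalk x a b k) (dceWalk x a b (k+1))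

lemma dceWalk_zero (x a b : α) : dceWalk x a b 0 = a := rfl

lemma dceWalk_one (x a b : α) : dceWalk x a b 1 = b := rfl

lemma dceWalk_add_two (x a b : α) (k : ℕ) :
    dceWalk x a b (k+2) = dceNext x (dceWalk x a b k) (dceWalk x a b (k+1)) := by
  rw [dceWalk]

end Walk

section CycEquiv

variable {α : Type*} [DistribLattice α] [OrderBot α] [Fintype α]

open Fin.CommRing in
lemma semCyc_of_isCyclicElem {x : α} (h : IsCyclicElem x) : SemCyc x := by
  obtain ⟨n, hn3, a, hinj, hmax, hxsup, hedge⟩ := h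
  haveI : NeZero n := ⟨by omega⟩
  have f1 : ∀ i, a i ≤ x := fun i => hxsup ▸ Finset.le_sup (Finset.mem_univ i)
  have fmem : ∀ i, DCEMem x (a i) := fun i => ⟨hmax i, f1 i⟩
  have f2 : ∀ b, DCEMem x b → ∃ i, b = a i := fun b hb =>
    maxJI_le_fin_sup hb.1 hmax (hxsup ▸ hb.2)
  -- val computations
  have hv1 : ((1 : Fin n) : ℕ) = 1 := by rw [Fin.val_one', Nat.mod_eq_of_lt (by omega)]
  have hsuccv : ∀ i : Fin n, ((i + 1 : Fin n) : ℕ) = if (i : ℕ) + 1 = n then 0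
      else (i : ℕ) + 1 := by
    intro i
    have hi := i.isLt
    rw [Fin.val_add, hv1]
    rcases (by omega : (i:ℕ) + 1 = n ∨ (i:ℕ) + 1 < n) with h | h
    · rw [if_pos h, h, Nat.mod_self]
    · rw [if_neg (by omega), Nat.mod_eq_of_lt h]
  have hsubv : ∀ i : Fin n, ((i - 1 : Fin n) : ℕ) = if (i : ℕ) = 0 then n - 1
      else (i : ℕ) - 1 := by
    intro i
    have hv : ((i - 1 : Fin n) : ℕ) = (n - 1 + (i : ℕ)) % n := by
      simp only [Fin.sub_def, Fin.val_one']
      rw [Nat.mod_eq_of_lt (show 1 < n by omega)]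
    rw [hv]
    rcases Nat.eq_zero_or_pos (i : ℕ) with h | h
    · rw [if_pos h, h, Nat.add_zero, Nat.mod_eq_of_lt (by omega)]
    · rw [if_neg (by omega)]
      have h2 : n - 1 + (i : ℕ) = n + ((i : ℕ) - 1) := by omega
      rw [h2, Nat.add_mod_left, Nat.mod_eq_of_lt (by omega)]
  -- consecutive adjacency
  have hAdjSucc : ∀ i : Fin n, DCEAdj (a i) (a (i + 1)) := by
    intro i
    have hi := i.isLt
    have hne : i ≠ i + 1 := by
      intro he
      have := congrArg Fin.val he
      rw [hsuccv] at this
      split at this <;> omega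
    rcases (by omega : (i : ℕ) + 1 = n ∨ (i : ℕ) + 1 < n) with hlast | hlt
    · -- i is the last index; i + 1 = 0
      have hi1 : ((i + 1 : Fin n) : ℕ) = 0 := by rw [hsuccv, if_pos hlast]
      have hlt' : i + 1 < i := by
        rw [Fin.lt_def, hi1]; omega
      have he := (hedge (i+1) i hlt').mpr (Or.inr ⟨hi1, by omega⟩)
      exact DCEAdj.symm (⟨hinj.ne hne.symm, he⟩ : DCEAdj (a (i+1)) (a i))
    · have hi1 : ((i + 1 : Fin n) : ℕ) = (i : ℕ) + 1 := by rw [hsuccv, if_neg (by omega)]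
      have hlt' : i < i + 1 := by rw [Fin.lt_def, hi1]; omega
      exact ⟨hinj.ne hne, (hedge i (i+1) hlt').mpr (Or.inl hi1)⟩
  -- only consecutive adjacency
  have hAdjOnly : ∀ i j : Fin n, DCEAdj (a i) (a j) → j = i + 1 ∨ j = i - 1 := by
    intro i j hadj
    have hij : i ≠ j := fun he => hadj.1 (congrArg a he)
    rcases lt_or_gt_of_ne hij with hlt | hlt
    · rcases (hedge i j hlt).mp hadj.2 with h | ⟨h0, h1⟩
      · left
        apply Fin.ext
        have hj := j.isLt
        rw [hsuccv, if_neg (by omega)]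
        omega
      · right
        apply Fin.ext
        have hj := j.isLt
        rw [hsubv, if_pos h0]
        omega
    · have hadj' : DCEAdj (a j) (a i) := hadj.symm
      rcases (hedge j i hlt).mp hadj'.2 with h | ⟨h0, h1⟩
      · right
        apply Fin.ext
        have hi := i.isLt
        rw [hsubv, if_neg (by omega)]
        omega
      · left
        apply Fin.ext
        have hi := i.isLt
        rw [hsuccv, if_pos (by omega)]
        omega
  refine ⟨?_, ?_, ?_, ?_⟩
  · intro u hu
    rw [hxsup]
    exact Finset.sup_le fun i _ => hu (a i) (fmem i)
  · refine ⟨a ⟨0, by omega⟩, a ⟨1, by omega⟩, a ⟨2, by omega⟩, fmem _, fmem _, fmem _,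
      hinj.ne ?_, hinj.ne ?_, hinj.ne ?_⟩ <;> exact Fin.ne_of_val_ne (by simp)
  · intro b hb
    obtain ⟨i, rfl⟩ := f2 b hb
    have hAC : DCEAdj (a i) (a (i - 1)) := by
      have h' := hAdjSucc (i - 1)
      rw [show i - 1 + 1 = i by ring] at h'
      exact h'.symm
    refine ⟨a (i + 1), a (i - 1), fmem _, fmem _, hinj.ne ?_, hAdjSucc i, hAC, ?_⟩
    · -- i + 1 ≠ i - 1
      intro he
      have := congrArg Fin.val he
      rw [hsuccv, hsubv] at this
      split at this <;> split at this <;> omega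
    · intro d hd hadj
      obtain ⟨j, rfl⟩ := f2 d hd
      rcases hAdjOnly i j hadj with rfl | rfl
      · exact Or.inl rfl
      · exact Or.inr rfl
  · rintro u ⟨a', hM, hau⟩ hcl b hb
    obtain ⟨i₀, rfl⟩ := f2 a' hM
    have claim : ∀ m : ℕ, a (i₀ + (m : Fin n)) ≤ u := by
      intro m
      induction m with
      | zero => simpa using hau
      | succ m ih =>
        have hstep := hcl (a (i₀ + (m : Fin n))) (a (i₀ + (m : Fin n) + 1)) (fmem _) ih
          (fmem _) (hAdjSucc _)
        have : ((m + 1 : ℕ) : Fin n) = ((m : ℕ) : Fin n) + 1 := by push_cast; ring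
        rw [this, ← add_assoc]
        exact hstep
    obtain ⟨j, rfl⟩ := f2 b hb
    have hc := claim ((j - i₀ : Fin n) : ℕ)
    rwa [Fin.cast_val_eq_self, show i₀ + (j - i₀) = j by ring] at hc

lemma isCyclicElem_of_semCyc {x : α} (h : SemCyc x) : IsCyclicElem x := by
  classical
  obtain ⟨hsup, ⟨a₀, b₀', c₀', hA, hB', hC', hab', hac', hbc'⟩, hdeg, hconn⟩ := h
  have hpair : ∀ a p q, DCEMem x a → DCEMem x p → DCEMem x q → p ≠ q → DCEAdj a p →
      DCEAdj a q → ∀ d, DCEMem x d → DCEAdj a d → d = p ∨ d = q := by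
    intro a p q ha hp hq hpq hap haq d hd had
    obtain ⟨b, c, hb, hc, hbc, hab, hac, hu⟩ := hdeg a ha
    rcases hu p hp hap with rfl | rfl <;> rcases hu q hq haq with rfl | rfl <;>
      rcases hu d hd had with rfl | rfl <;> tauto
  obtain ⟨b₀, c₀, hb₀, hc₀, hbc₀, hadj₀, hadjc₀, hu₀⟩ := hdeg a₀ hA
  set s := dceWalk x a₀ b₀ with hs
  have hs0 : s 0 = a₀ := rfl
  have hs1 : s 1 = b₀ := rfl
  have hex : ∀ k, DCEMem x (s k) → DCEMem x (s (k+1)) → DCEAdj (s k) (s (k+1)) →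
      ∃ d, DCEMem x d ∧ DCEAdj (s (k+1)) d ∧ d ≠ s k := by
    intro k h1 h2 h3
    obtain ⟨b, c, hb, hc, hbc, hab, hac, hu⟩ := hdeg (s (k+1)) h2
    rcases hu (s k) h1 h3.symm with he | he
    · refine ⟨c, hc, hac, ?_⟩
      rw [he]; exact hbc.symm
    · refine ⟨b, hb, hab, ?_⟩
      rw [he]; exact hbc
  have main : ∀ k, DCEMem x (s k) ∧ DCEMem x (s (k+1)) ∧ DCEAdj (s k) (s (k+1)) := by
    intro k
    induction k with
    | zero => exact ⟨hA, hb₀, hadj₀⟩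
    | succ k ih =>
      obtain ⟨h1, h2, h3⟩ := ih
      have hx2 := dceNext_spec (hex k h1 h2 h3)
      have hw : s (k+2) = dceNext x (s k) (s (k+1)) := dceWalk_add_two x a₀ b₀ k
      refine ⟨h2, ?_, ?_⟩
      · rw [hw]; exact hx2.1
      · rw [hw]; exact hx2.2.1
  have hne2 : ∀ k, s (k+2) ≠ s k := by
    intro k
    obtain ⟨h1, h2, h3⟩ := main k
    have hx2 := dceNext_spec (hex k h1 h2 h3)
    have hw2 : s (k+2) = dceNext x (s k) (s (k+1)) := dceWalk_add_two x a₀ b₀ k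
    rw [hw2]
    exact hx2.2.2
  have hnbr : ∀ k d, DCEMem x d → DCEAdj (s (k+1)) d → d = s k ∨ d = s (k+2) := by
    intro k d hd hdadj
    exact hpair (s (k+1)) (s k) (s (k+2)) (main k).2.1 (main k).1 (main (k+1)).2.1
      (hne2 k).symm (main k).2.2.symm (main (k+1)).2.2 d hd hdadj
  have hrep : ∃ m, ∃ j, j < m ∧ s m = s j := by
    obtain ⟨i, j, hij, he⟩ := Finite.exists_ne_map_eq_of_infinite s
    rcases hij.lt_or_gt with hlt | hlt
    · exact ⟨j, i, hlt, he.symm⟩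
    · exact ⟨i, j, hlt, he⟩
  set n := Nat.find hrep with hn
  obtain ⟨j, hjn, hsnj⟩ := Nat.find_spec hrep
  rw [← hn] at hjn hsnj
  have hmin : ∀ m, m < n → ¬∃ j, j < m ∧ s m = s j := fun m hm => Nat.find_min hrep hm
  have hj0 : j = 0 := by
    by_contra hj
    rcases (by omega : j + 1 = n ∨ j + 2 = n ∨ j + 2 < n) with hc | hc | hc
    · have hne : s j ≠ s (j+1) := (main j).2.2.1
      rw [hc] at hne
      exact hne hsnj.symm
    · apply hne2 j
      rw [hc]
      exact hsnj
    · have h1 : DCEAdj (s (n-1)) (s n) := by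
        have := (main (n-1)).2.2
        rwa [show n-1+1 = n by omega] at this
      have h2 : DCEMem x (s (n-1)) := (main (n-1)).1
      rw [hsnj] at h1
      have h3 : DCEAdj (s (j-1+1)) (s (n-1)) := by
        rw [show j-1+1 = j by omega]
        exact h1.symm
      have h4 := hnbr (j-1) (s (n-1)) h2 h3
      apply hmin (n-1) (by omega)
      rcases h4 with h5 | h5
      · exact ⟨j-1, by omega, h5⟩
      · rw [show j-1+2 = j+1 by omega] at h5
        exact ⟨j+1, by omega, h5⟩
  subst hj0
  have hn3 : 3 ≤ n := by
    have e1 : s 0 ≠ s 1 := (main 0).2.2.1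
    have e2 : s 2 ≠ s 0 := hne2 0
    by_contra hcon
    rcases (by omega : n = 1 ∨ n = 2) with hcn | hcn
    · rw [hcn] at hsnj; exact e1 hsnj.symm
    · rw [hcn] at hsnj; exact e2 hsnj
  have hinjlt : ∀ p q, p < q → q < n → s p ≠ s q := by
    intro p q hpq hqn he
    exact hmin q hqn ⟨p, hpq, he.symm⟩
  have hsinj : ∀ p q, p < n → q < n → s p = s q → p = q := by
    intro p q hp hq he
    rcases lt_trichotomy p q with hlt | hlt | hlt
    · exact absurd he (hinjlt p q hlt hq)
    · exact hlt
    · exact absurd he.symm (hinjlt q p hlt hp)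
  have hadjlast : DCEAdj (s 0) (s (n-1)) := by
    have h1 : DCEAdj (s (n-1)) (s n) := by
      have := (main (n-1)).2.2
      rwa [show n-1+1 = n by omega] at this
    rw [hsnj] at h1
    exact h1.symm
  have h0nbr : ∀ d, DCEMem x d → DCEAdj (s 0) d → d = s 1 ∨ d = s (n-1) := by
    intro d hd hadj
    exact hpair (s 0) (s 1) (s (n-1)) (main 0).1 (main 0).2.1 (main (n-1)).1
      (hinjlt 1 (n-1) (by omega) (by omega)) (main 0).2.2 hadjlast d hd hadj
  haveI : NeZero n := ⟨by omega⟩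
  set a : Fin n → α := fun i => s i with ha
  have hamem : ∀ i : Fin n, DCEMem x (a i) := fun i => (main i).1
  have hainj : Function.Injective a := by
    intro i j he
    exact Fin.ext (hsinj i j i.isLt j.isLt he)
  have hclosed : ∀ (i : Fin n) d, DCEMem x d → DCEAdj (a i) d → ∃ m : Fin n, d = a m := by
    intro i d hd hadj
    rcases Nat.eq_zero_or_pos (i : ℕ) with h0 | h1
    · have h0' : a i = s 0 := by show s (i : ℕ) = s 0; rw [h0]
      rw [h0'] at hadj
      rcases h0nbr d hd hadj with rfl | rfl
      · exact ⟨⟨1, by omega⟩, rfl⟩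
      · exact ⟨⟨n-1, by omega⟩, rfl⟩
    · have hadj' : DCEAdj (s ((i : ℕ) - 1 + 1)) d := by
        rwa [show (i:ℕ)-1+1 = (i:ℕ) by omega]
      rcases hnbr ((i : ℕ) - 1) d hd hadj' with rfl | rfl
      · exact ⟨⟨(i:ℕ)-1, by omega⟩, rfl⟩
      · rcases (by omega : (i:ℕ)-1+2 = n ∨ (i:ℕ)-1+2 < n) with hc | hc
        · refine ⟨⟨0, lt_of_lt_of_le (by norm_num : (0:ℕ) < 3) hn3⟩, ?_⟩
          show s ((i:ℕ)-1+2) = s 0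
          rw [hc]
          exact hsnj
        · exact ⟨⟨(i:ℕ)-1+2, hc⟩, rfl⟩
  have hle : ∀ i : Fin n, a i ≤ Finset.univ.sup a := fun i => Finset.le_sup (Finset.mem_univ i)
  have hMrange : ∀ b, DCEMem x b → ∃ i, b = a i := by
    intro b hb
    have hble : b ≤ Finset.univ.sup a := by
      apply hconn (Finset.univ.sup a) ⟨a ⟨0, by omega⟩, hamem _, hle _⟩ ?_ b hb
      intro p q hp hpu hq hadj
      obtain ⟨i, rfl⟩ := maxJI_le_fin_sup hp.1 (fun i => (hamem i).1) hpu
      obtain ⟨m, rfl⟩ := hclosed i q hq hadj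
      exact hle m
    exact maxJI_le_fin_sup hb.1 (fun i => (hamem i).1) hble
  have hxeq : x = Finset.univ.sup a := by
    apply le_antisymm
    · apply hsup
      intro b hb
      obtain ⟨i, rfl⟩ := hMrange b hb
      exact hle i
    · exact Finset.sup_le fun i _ => (hamem i).2
  refine ⟨n, hn3, a, hainj, fun i => (hamem i).1, hxeq, ?_⟩
  intro i j hij
  constructor
  · intro hc
    have hne : a i ≠ a j := hainj.ne (ne_of_lt hij)
    have hadj : DCEAdj (a i) (a j) := ⟨hne, hc⟩
    rcases Nat.eq_zero_or_pos (i : ℕ) with h0 | h1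
    · have h0' : a i = s 0 := by show s (i : ℕ) = s 0; rw [h0]
      rw [h0'] at hadj
      rcases h0nbr (a j) (hamem j) hadj with he | he
      · left
        have := hsinj (j : ℕ) 1 j.isLt (by omega) he
        omega
      · right
        have := hsinj (j : ℕ) (n-1) j.isLt (by omega) he
        omega
    · have hadj' : DCEAdj (s ((i : ℕ) - 1 + 1)) (a j) := by
        rwa [show (i:ℕ)-1+1 = (i:ℕ) by omega]
      rcases hnbr ((i : ℕ) - 1) (a j) (hamem j) hadj' with he | he
      · have := hsinj (j : ℕ) ((i:ℕ)-1) j.isLt (by omega) he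
        have hij' : (i : ℕ) < (j : ℕ) := hij
        omega
      · rcases (by omega : (i:ℕ)-1+2 = n ∨ (i:ℕ)-1+2 < n) with hcn | hcn
        · rw [hcn, hsnj] at he
          have := hsinj (j : ℕ) 0 j.isLt (by omega) he
          have hij' : (i : ℕ) < (j : ℕ) := hij
          omega
        · left
          have := hsinj (j : ℕ) ((i:ℕ)-1+2) j.isLt hcn he
          omega
  · rintro (hc | ⟨h0, h1⟩)
    · show ∃ c, JoinIrred c ∧ c ≤ s (i : ℕ) ∧ c ≤ s (j : ℕ)
      have h2 := (main (i : ℕ)).2.2.2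
      rwa [show (i:ℕ)+1 = (j:ℕ) from hc.symm] at h2
    · show ∃ c, JoinIrred c ∧ c ≤ s (i : ℕ) ∧ c ≤ s (j : ℕ)
      rw [h0, h1]
      exact hadjlast.2

lemma isCyclicElem_iff_semCyc {x : α} : IsCyclicElem x ↔ SemCyc x :=
  ⟨semCyc_of_isCyclicElem, isCyclicElem_of_semCyc⟩

lemma dce_iff_semDCE : DecomposableCyclicElements α ↔ SemDCE α := by
  unfold DecomposableCyclicElements SemDCE
  refine forall_congr' fun x => ?_
  rw [isCyclicElem_iff_semCyc]
  refine imp_congr_right fun _ => ?_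
  refine exists_congr fun y => exists_congr fun z => ?_
  rw [isVWElem_iff_semVW, isVWElem_iff_semVW]
  refine and_congr_right fun _ => and_congr_right fun _ => and_congr_right fun _ => ?_
  rw [Set.eq_empty_iff_forall_notMem]
  refine forall_congr' fun a => ?_
  simp only [Set.mem_inter_iff, Set.mem_Iic, DCEMem]

end CycEquiv


/-! ### The first-order sentence -/

section FormulaDefs

open FirstOrder Language BoundedFormula

/-- Shorthand for a de Bruijn variable term. -/
def tvF {n : ℕ} (i : Fin n) : Language.order.Term (Empty ⊕ Fin n) :=
  Language.Term.var (Sum.inr i)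

/-- `xs i ≤ xs j`. -/
def leF {n : ℕ} (i j : Fin n) : Language.order.BoundedFormula Empty n :=
  Language.Term.le (tvF i) (tvF j)

/-- `xs i = xs j`. -/
def eqF {n : ℕ} (i j : Fin n) : Language.order.BoundedFormula Empty n :=
  Language.Term.bdEqual (tvF i) (tvF j)

/-- `xs i = ⊥`. -/
def botF {n : ℕ} (i : Fin n) : Language.order.BoundedFormula Empty n :=
  ∀' leF i.castSucc (Fin.last n)

/-- `xs k = xs i ⊔ xs j`. -/
def supF {n : ℕ} (k i j : Fin n) : Language.order.BoundedFormula Empty n :=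
  leF i k ⊓ leF j k ⊓
    ∀' ((leF i.castSucc (Fin.last n) ⊓ leF j.castSucc (Fin.last n)) ⟹
      leF k.castSucc (Fin.last n))

/-- `JoinIrred (xs i)`. -/
def jiF {n : ℕ} (i : Fin n) : Language.order.BoundedFormula Empty n :=
  ∼(botF i) ⊓ ∀' ∀' (supF i.castSucc.castSucc ((Fin.last n).castSucc) (Fin.last (n+1)) ⟹
    (eqF i.castSucc.castSucc ((Fin.last n).castSucc) ⊔ eqF i.castSucc.castSucc (Fin.last (n+1))))

/-- `xs i ∈ maxJI`. -/
def maxF {n : ℕ} (i : Fin n) : Language.order.BoundedFormula Empty n :=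
  jiF i ⊓ ∀' ((jiF (Fin.last n) ⊓ leF i.castSucc (Fin.last n)) ⟹ eqF i.castSucc (Fin.last n))

/-- `DCEMem (xs xi) (xs i)`. -/
def memF {n : ℕ} (xi i : Fin n) : Language.order.BoundedFormula Empty n :=
  maxF i ⊓ leF i xi

/-- `DCEAdj (xs i) (xs j)`. -/
def adjF {n : ℕ} (i j : Fin n) : Language.order.BoundedFormula Empty n :=
  ∼(eqF i j) ⊓ ∃' (jiF (Fin.last n) ⊓ leF (Fin.last n) i.castSucc ⊓ leF (Fin.last n) j.castSucc)

/-- `∀ a, DCEMem (xs xi) a → a ≤ xs ui`. -/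
def ubF {n : ℕ} (xi ui : Fin n) : Language.order.BoundedFormula Empty n :=
  ∀' (memF xi.castSucc (Fin.last n) ⟹ leF (Fin.last n) ui.castSucc)

/-- First clause of `SemCyc`. -/
def cyc1F {n : ℕ} (xi : Fin n) : Language.order.BoundedFormula Empty n :=
  ∀' (ubF xi.castSucc (Fin.last n) ⟹ leF xi.castSucc (Fin.last n))

/-- Second clause of `SemCyc`. -/
def cyc2F {n : ℕ} (xi : Fin n) : Language.order.BoundedFormula Empty n :=
  ∃' ∃' ∃' (memF xi.castSucc.castSucc.castSucc ((Fin.last n).castSucc.castSucc) ⊓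
    memF xi.castSucc.castSucc.castSucc ((Fin.last (n+1)).castSucc) ⊓
    memF xi.castSucc.castSucc.castSucc (Fin.last (n+2)) ⊓
    ∼(eqF ((Fin.last n).castSucc.castSucc) ((Fin.last (n+1)).castSucc)) ⊓
    ∼(eqF ((Fin.last n).castSucc.castSucc) (Fin.last (n+2))) ⊓
    ∼(eqF ((Fin.last (n+1)).castSucc) (Fin.last (n+2))))

/-- Inner part of the degree-two clause. -/
def deg1F {n : ℕ} (xi ai bi ci : Fin n) : Language.order.BoundedFormula Empty n :=
  memF xi bi ⊓ memF xi ci ⊓ ∼(eqF bi ci) ⊓ adjF ai bi ⊓ adjF ai ci ⊓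
    ∀' (memF xi.castSucc (Fin.last n) ⟹ (adjF ai.castSucc (Fin.last n) ⟹
      (eqF (Fin.last n) bi.castSucc ⊔ eqF (Fin.last n) ci.castSucc)))

/-- Third clause of `SemCyc`. -/
def cyc3F {n : ℕ} (xi : Fin n) : Language.order.BoundedFormula Empty n :=
  ∀' (memF xi.castSucc (Fin.last n) ⟹ ∃' ∃' (deg1F xi.castSucc.castSucc.castSucc
    ((Fin.last n).castSucc.castSucc) ((Fin.last (n+1)).castSucc) (Fin.last (n+2))))

/-- Fourth clause of `SemCyc` (connectivity). -/
def cyc4F {n : ℕ} (xi : Fin n) : Language.order.BoundedFormula Empty n :=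
  ∀' ((∃' (memF xi.castSucc.castSucc (Fin.last (n+1)) ⊓
        leF (Fin.last (n+1)) ((Fin.last n).castSucc))) ⟹
    ((∀' ∀' (memF xi.castSucc.castSucc.castSucc ((Fin.last (n+1)).castSucc) ⟹
        (leF ((Fin.last (n+1)).castSucc) ((Fin.last n).castSucc.castSucc) ⟹
        (memF xi.castSucc.castSucc.castSucc (Fin.last (n+2)) ⟹
        (adjF ((Fin.last (n+1)).castSucc) (Fin.last (n+2)) ⟹
        leF (Fin.last (n+2)) ((Fin.last n).castSucc.castSucc)))))) ⟹
      ubF xi.castSucc (Fin.last n)))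

/-- `SemCyc (xs xi)`. -/
def cycF {n : ℕ} (xi : Fin n) : Language.order.BoundedFormula Empty n :=
  cyc1F xi ⊓ cyc2F xi ⊓ cyc3F xi ⊓ cyc4F xi

/-- Third clause of `SemVW`. -/
def vw3F {n : ℕ} (yi : Fin n) : Language.order.BoundedFormula Empty n :=
  ∀' (memF yi.castSucc (Fin.last n) ⟹ ∃' (memF yi.castSucc.castSucc (Fin.last (n+1)) ⊓
    adjF ((Fin.last n).castSucc) (Fin.last (n+1)) ⊓
    ∀' (memF yi.castSucc.castSucc.castSucc (Fin.last (n+2)) ⟹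
      (adjF ((Fin.last n).castSucc.castSucc) (Fin.last (n+2)) ⟹
        eqF (Fin.last (n+2)) ((Fin.last (n+1)).castSucc)))))

/-- `SemVW (xs yi)`. -/
def vwF {n : ℕ} (yi : Fin n) : Language.order.BoundedFormula Empty n :=
  ∼(botF yi) ⊓ cyc1F yi ⊓ vw3F yi

/-- The sentence expressing the Decomposable Cyclic Elements Property. -/
def dceSentence : Language.order.Sentence :=
  ∀' (cycF (Fin.last 0) ⟹ ∃' ∃' (vwF ((Fin.last 1).castSucc) ⊓ vwF (Fin.last 2) ⊓
    supF ((Fin.last 0).castSucc.castSucc) ((Fin.last 1).castSucc) (Fin.last 2) ⊓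
    ∀' (∼(memF ((Fin.last 1).castSucc.castSucc) (Fin.last 3) ⊓
      leF (Fin.last 3) ((Fin.last 2).castSucc)))))

end FormulaDefs

section FormulaRealize

open FirstOrder Language BoundedFormula

variable {M : Type*} [Lattice M] [OrderBot M] [Language.order.Structure M]
  [Language.order.OrderedStructure M]

@[simp] lemma realize_leF {n : ℕ} (i j : Fin n) (v : Empty → M) (xs : Fin n → M) :
    (leF i j).Realize v xs ↔ xs i ≤ xs j := by
  simp [leF, tvF, Term.realize_le, Language.Term.realize_var]

@[simp] lemma realize_eqF {n : ℕ} (i j : Fin n) (v : Empty → M) (xs : Fin n → M) :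
    (eqF i j).Realize v xs ↔ xs i = xs j := by
  simp [eqF, tvF, realize_bdEqual, Language.Term.realize_var]

@[simp] lemma realize_botF {n : ℕ} (i : Fin n) (v : Empty → M) (xs : Fin n → M) :
    (botF i).Realize v xs ↔ xs i = ⊥ := by
  simp only [botF, realize_all, realize_leF, Fin.snoc_castSucc, Fin.snoc_last]
  exact ⟨fun h => le_bot_iff.mp (h ⊥), fun h z => h ▸ bot_le⟩

@[simp] lemma realize_supF {n : ℕ} (k i j : Fin n) (v : Empty → M) (xs : Fin n → M) :
    (supF k i j).Realize v xs ↔ xs k = xs i ⊔ xs j := by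
  simp only [supF, realize_inf, realize_imp, realize_all, realize_leF,
    Fin.snoc_castSucc, Fin.snoc_last]
  constructor
  · rintro ⟨⟨h1, h2⟩, h3⟩
    exact le_antisymm (h3 (xs i ⊔ xs j) ⟨le_sup_left, le_sup_right⟩) (sup_le h1 h2)
  · intro h
    refine ⟨⟨?_, ?_⟩, fun w hw => ?_⟩ <;> rw [h]
    exacts [le_sup_left, le_sup_right, sup_le hw.1 hw.2]

@[simp] lemma realize_jiF {n : ℕ} (i : Fin n) (v : Empty → M) (xs : Fin n → M) :
    (jiF i).Realize v xs ↔ JoinIrred (xs i) := by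
  simp only [jiF, realize_inf, realize_not, realize_all, realize_imp, realize_sup,
    realize_supF, realize_eqF, realize_botF, Fin.snoc_castSucc, Fin.snoc_last]
  rfl

@[simp] lemma realize_maxF {n : ℕ} (i : Fin n) (v : Empty → M) (xs : Fin n → M) :
    (maxF i).Realize v xs ↔ xs i ∈ maxJI M := by
  simp only [maxF, realize_inf, realize_all, realize_imp, realize_jiF, realize_leF,
    realize_eqF, Fin.snoc_castSucc, Fin.snoc_last, and_imp]
  rfl

@[simp] lemma realize_memF {n : ℕ} (xi i : Fin n) (v : Empty → M) (xs : Fin n → M) :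
    (memF xi i).Realize v xs ↔ DCEMem (xs xi) (xs i) := by
  simp only [memF, realize_inf, realize_maxF, realize_leF]
  rfl

@[simp] lemma realize_adjF {n : ℕ} (i j : Fin n) (v : Empty → M) (xs : Fin n → M) :
    (adjF i j).Realize v xs ↔ DCEAdj (xs i) (xs j) := by
  simp only [adjF, realize_inf, realize_not, realize_ex, realize_jiF, realize_leF,
    realize_eqF, Fin.snoc_castSucc, Fin.snoc_last, DCEAdj, and_assoc]

@[simp] lemma realize_ubF {n : ℕ} (xi ui : Fin n) (v : Empty → M) (xs : Fin n → M) :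
    (ubF xi ui).Realize v xs ↔ ∀ a, DCEMem (xs xi) a → a ≤ xs ui := by
  simp only [ubF, realize_all, realize_imp, realize_memF, realize_leF,
    Fin.snoc_castSucc, Fin.snoc_last]

@[simp] lemma realize_cyc1F {n : ℕ} (xi : Fin n) (v : Empty → M) (xs : Fin n → M) :
    (cyc1F xi).Realize v xs ↔ ∀ u, (∀ a, DCEMem (xs xi) a → a ≤ u) → xs xi ≤ u := by
  simp only [cyc1F, realize_all, realize_imp, realize_ubF, realize_leF,
    Fin.snoc_castSucc, Fin.snoc_last]

@[simp] lemma realize_cyc2F {n : ℕ} (xi : Fin n) (v : Empty → M) (xs : Fin n → M) :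
    (cyc2F xi).Realize v xs ↔ ∃ a b c, DCEMem (xs xi) a ∧ DCEMem (xs xi) b ∧
      DCEMem (xs xi) c ∧ a ≠ b ∧ a ≠ c ∧ b ≠ c := by
  simp only [cyc2F, realize_ex, realize_inf, realize_not, realize_memF, realize_eqF,
    Fin.snoc_castSucc, Fin.snoc_last]
  refine exists_congr fun a => exists_congr fun b => exists_congr fun c => ?_
  tauto

@[simp] lemma realize_deg1F {n : ℕ} (xi ai bi ci : Fin n) (v : Empty → M) (xs : Fin n → M) :
    (deg1F xi ai bi ci).Realize v xs ↔ DCEMem (xs xi) (xs bi) ∧ DCEMem (xs xi) (xs ci) ∧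
      xs bi ≠ xs ci ∧ DCEAdj (xs ai) (xs bi) ∧ DCEAdj (xs ai) (xs ci) ∧
      ∀ d, DCEMem (xs xi) d → DCEAdj (xs ai) d → d = xs bi ∨ d = xs ci := by
  simp only [deg1F, realize_inf, realize_not, realize_imp, realize_all, realize_sup,
    realize_memF, realize_adjF, realize_eqF, Fin.snoc_castSucc, Fin.snoc_last]
  tauto

@[simp] lemma realize_cyc3F {n : ℕ} (xi : Fin n) (v : Empty → M) (xs : Fin n → M) :
    (cyc3F xi).Realize v xs ↔ ∀ a, DCEMem (xs xi) a → ∃ b c, DCEMem (xs xi) b ∧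
      DCEMem (xs xi) c ∧ b ≠ c ∧ DCEAdj a b ∧ DCEAdj a c ∧
      ∀ d, DCEMem (xs xi) d → DCEAdj a d → d = b ∨ d = c := by
  simp only [cyc3F, realize_all, realize_imp, realize_ex, realize_memF, realize_deg1F,
    Fin.snoc_castSucc, Fin.snoc_last]

@[simp] lemma realize_cyc4F {n : ℕ} (xi : Fin n) (v : Empty → M) (xs : Fin n → M) :
    (cyc4F xi).Realize v xs ↔ ∀ u, (∃ a, DCEMem (xs xi) a ∧ a ≤ u) →
      (∀ a b, DCEMem (xs xi) a → a ≤ u → DCEMem (xs xi) b → DCEAdj a b → b ≤ u) →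
      ∀ a, DCEMem (xs xi) a → a ≤ u := by
  simp only [cyc4F, realize_all, realize_imp, realize_ex, realize_inf, realize_memF,
    realize_leF, realize_adjF, realize_ubF, Fin.snoc_castSucc, Fin.snoc_last]

@[simp] lemma realize_cycF {n : ℕ} (xi : Fin n) (v : Empty → M) (xs : Fin n → M) :
    (cycF xi).Realize v xs ↔ SemCyc (xs xi) := by
  simp only [cycF, realize_inf, realize_cyc1F, realize_cyc2F, realize_cyc3F, realize_cyc4F,
    SemCyc, and_assoc]

@[simp] lemma realize_vw3F {n : ℕ} (yi : Fin n) (v : Empty → M) (xs : Fin n → M) :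
    (vw3F yi).Realize v xs ↔ ∀ a, DCEMem (xs yi) a → ∃ b, DCEMem (xs yi) b ∧
      DCEAdj a b ∧ ∀ c, DCEMem (xs yi) c → DCEAdj a c → c = b := by
  simp only [vw3F, realize_all, realize_imp, realize_ex, realize_inf, realize_memF,
    realize_adjF, realize_eqF, Fin.snoc_castSucc, Fin.snoc_last]
  refine forall_congr' fun a => imp_congr_right fun _ => exists_congr fun b => ?_
  tauto

@[simp] lemma realize_vwF {n : ℕ} (yi : Fin n) (v : Empty → M) (xs : Fin n → M) :
    (vwF yi).Realize v xs ↔ SemVW (xs yi) := by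
  simp only [vwF, realize_inf, realize_not, realize_botF, realize_cyc1F, realize_vw3F, SemVW,
    and_assoc, ne_eq]

lemma realize_dceSentence :
    (dceSentence.Realize M) ↔ SemDCE M := by
  have : ∀ (v : Empty → M) (xs : Fin 0 → M),
      (BoundedFormula.Realize dceSentence v xs) ↔ SemDCE M := by
    intro v xs
    simp only [dceSentence, realize_all, realize_imp, realize_ex, realize_inf, realize_not,
      realize_cycF, realize_vwF, realize_supF, realize_memF, realize_leF,
      Fin.snoc_castSucc, Fin.snoc_last, SemDCE]
    refine forall_congr' fun x => imp_congr_right fun _ => exists_congr fun y =>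
      exists_congr fun z => ?_
    tauto
  exact this _ _

end FormulaRealize

/-- There is a first-order sentence in the language with a single binary relation symbol `≤`
such that a finite distributive lattice satisfying the Two-cover Property (viewed as a
structure via its lattice order) satisfies the sentence exactly when it satisfies the
Decomposable Cyclic Elements Property. -/
theorem decomposableCyclicElements_first_order_expressible :
    ∃ φ : Language.order.Sentence,
      ∀ (D : Type) [DistribLattice D] [OrderBot D] [Fintype D],
        TwoCoverProperty D →
          (@FirstOrder.Language.Sentence.Realize Language.order D
              (Language.orderStructure D) φ ↔
            DecomposableCyclicElements D) := by
  refine ⟨dceSentence, ?_⟩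
  intro D _ _ _ _
  letI := Language.orderStructure D
  haveI : Language.order.OrderedStructure D := ⟨fun _ => Iff.rfl⟩
  rw [realize_dceSentence, dce_iff_semDCE]
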